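/- For n ≥ 5, the commutator subgroup [B_n, B_n] of the braid group B_n is perfect, i.e., [[B_n,B_n],[B_n,B_n]] = [B_n,B_n]. -/

import Mathlib

/-- The braid relations on generators indexed by `Fin (n-1)` (0-indexed: generator `i`
corresponds to the standard generator `σ_{i+1}`). -/
def braidRels (n : ℕ) : Set (FreeGroup (Fin (n - 1))) :=
  {r | (∃ i j : Fin (n - 1), (i : ℕ) + 1 = (j : ℕ) ∧
          r = FreeGroup.of i * FreeGroup.of j * FreeGroup.of i *
              (FreeGroup.of j * FreeGroup.of i * FreeGroup.of j)⁻¹) ∨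
       (∃ i j : Fin (n - 1), (i : ℕ) + 2 ≤ (j : ℕ) ∧
          r = FreeGroup.of i * FreeGroup.of j * (FreeGroup.of j * FreeGroup.of i)⁻¹)}

/-- The braid group `B_n`, presented by the standard generators and braid relations. -/
def BraidGroup (n : ℕ) : Type := PresentedGroup (braidRels n)

instance (n : ℕ) : Group (BraidGroup n) := by unfold BraidGroup; infer_instance

/-- The standard generator `σ_{i+1}` of `B_n` (0-indexed). -/
def braidGen (n : ℕ) (i : Fin (n - 1)) : BraidGroup n := PresentedGroup.of i

open scoped commutatorElement

lemma braidRel_one {n : ℕ} {r : FreeGroup (Fin (n - 1))} (hr : r ∈ braidRels n) :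
    PresentedGroup.mk (braidRels n) r = 1 :=
  (QuotientGroup.eq_one_iff r).2 (Subgroup.subset_normalClosure hr)

lemma braid_rel1 {n : ℕ} (i j : Fin (n - 1)) (h : (i : ℕ) + 1 = (j : ℕ)) :
    braidGen n i * braidGen n j * braidGen n i = braidGen n j * braidGen n i * braidGen n j := by
  have h1 : PresentedGroup.mk (braidRels n)
      (FreeGroup.of i * FreeGroup.of j * FreeGroup.of i *
        (FreeGroup.of j * FreeGroup.of i * FreeGroup.of j)⁻¹) = 1 :=
    braidRel_one (Or.inl ⟨i, j, h, rfl⟩)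
  simp only [map_mul, map_inv] at h1
  exact mul_inv_eq_one.1 h1

lemma braid_rel2 {n : ℕ} (i j : Fin (n - 1)) (h : (i : ℕ) + 2 ≤ (j : ℕ)) :
    braidGen n i * braidGen n j = braidGen n j * braidGen n i := by
  have h1 : PresentedGroup.mk (braidRels n)
      (FreeGroup.of i * FreeGroup.of j * (FreeGroup.of j * FreeGroup.of i)⁻¹) = 1 :=
    braidRel_one (Or.inr ⟨i, j, h, rfl⟩)
  simp only [map_mul, map_inv] at h1
  exact mul_inv_eq_one.1 h1

/-- In any group, if two elements commute and satisfy the braid relation, they are equal. -/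
lemma eq_of_commute_of_braid {G : Type*} [Group G] {x y : G} (hc : Commute x y)
    (hb : x * y * x = y * x * y) : x = y := by
  have h1 : x * y * x = x * y * y := by rw [hb, hc.eq]
  exact mul_left_cancel h1

/-- σ_{i+1} σ_i⁻¹ is a commutator. -/
lemma braid_succ_diff_mem {n : ℕ} (i j : Fin (n - 1)) (h : (i : ℕ) + 1 = (j : ℕ)) :
    braidGen n j * (braidGen n i)⁻¹ ∈ commutator (BraidGroup n) := by
  have hb := braid_rel1 i j h
  have heq : braidGen n j * (braidGen n i)⁻¹
      = ⁅braidGen n i * braidGen n j, braidGen n i⁆ := by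
    rw [commutatorElement_def]
    rw [show braidGen n i * braidGen n j * braidGen n i = braidGen n j * braidGen n i * braidGen n j from hb]
    group
  rw [heq]
  exact Subgroup.commutator_mem_commutator (Subgroup.mem_top _) (Subgroup.mem_top _)

/-- For `n ≥ 5`, the commutator subgroup `[B_n, B_n]` of the braid group is perfect. -/
theorem braid_commutator_perfect (n : ℕ) (hn : 5 ≤ n) :
    ⁅commutator (BraidGroup n), commutator (BraidGroup n)⁆ = commutator (BraidGroup n) := by
  set G := BraidGroup n with hG
  set K : Subgroup G := ⁅commutator G, commutator G⁆ with hK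
  have hKnormal : K.Normal := by
    rw [hK]; unfold commutator; infer_instance
  refine le_antisymm (Subgroup.commutator_mono le_top le_top) ?_
  letI : K.Normal := hKnormal
  set Q := G ⧸ K with hQ
  set π : G →* Q := QuotientGroup.mk' K with hπ
  have hπsurj : Function.Surjective π := QuotientGroup.mk'_surjective K
  have hmapcomm : (commutator G).map π = commutator Q := by
    unfold commutator
    rw [Subgroup.map_commutator, Subgroup.map_top_of_surjective π hπsurj]
  have hcc : ⁅commutator Q, commutator Q⁆ = (⊥ : Subgroup Q) := by
    rw [← hmapcomm, ← Subgroup.map_commutator, ← hK, eq_bot_iff]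
    rintro x ⟨g, hg, rfl⟩
    have : g ∈ π.ker := by rw [hπ, QuotientGroup.ker_mk']; exact hg
    simpa using this
  have habel : ∀ x ∈ commutator Q, ∀ y ∈ commutator Q, Commute x y := by
    intro x hx y hy
    have h1 : ⁅x, y⁆ ∈ (⊥ : Subgroup Q) := hcc ▸ Subgroup.commutator_mem_commutator hx hy
    rwa [Subgroup.mem_bot, commutatorElement_eq_one_iff_commute] at h1
  set a : Fin (n - 1) → Q := fun i => π (braidGen n i) with ha
  have hrel1 : ∀ i j : Fin (n - 1), (i : ℕ) + 1 = (j : ℕ) →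
      a i * a j * a i = a j * a i * a j := by
    intro i j h
    simp only [ha, ← map_mul]
    rw [braid_rel1 i j h]
  have hrel2 : ∀ i j : Fin (n - 1), (i : ℕ) + 2 ≤ (j : ℕ) → Commute (a i) (a j) := by
    intro i j h
    simp only [ha, Commute, SemiconjBy, ← map_mul]
    rw [braid_rel2 i j h]
  have hdiff : ∀ i j : Fin (n - 1), (i : ℕ) + 1 = (j : ℕ) →
      a j * (a i)⁻¹ ∈ commutator Q := by
    intro i j h
    have h1 : π (braidGen n j * (braidGen n i)⁻¹) ∈ (commutator G).map π :=
      Subgroup.mem_map_of_mem π (braid_succ_diff_mem i j h)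
    rw [hmapcomm] at h1
    simpa [ha] using h1
  have h4 : 4 ≤ n - 1 := by omega
  have hlt : ∀ m, m < 4 → m < n - 1 := fun m hm => lt_of_lt_of_le hm h4
  set i0 : Fin (n - 1) := ⟨0, hlt 0 (by norm_num)⟩ with hi0
  set i1 : Fin (n - 1) := ⟨1, hlt 1 (by norm_num)⟩ with hi1
  set i2 : Fin (n - 1) := ⟨2, hlt 2 (by norm_num)⟩ with hi2
  set i3 : Fin (n - 1) := ⟨3, hlt 3 (by norm_num)⟩ with hi3
  have hs : a i3 * (a i2)⁻¹ ∈ commutator Q := hdiff i2 i3 rfl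
  have ht : a i2 * (a i0)⁻¹ ∈ commutator Q := by
    have h1 : a i1 * (a i0)⁻¹ ∈ commutator Q := hdiff i0 i1 rfl
    have h2 : a i2 * (a i1)⁻¹ ∈ commutator Q := hdiff i1 i2 rfl
    have h3 : (a i2 * (a i1)⁻¹) * (a i1 * (a i0)⁻¹) ∈ commutator Q :=
      Subgroup.mul_mem _ h2 h1
    simpa [mul_assoc] using h3
  have hc02 : Commute (a i0) (a i2) := hrel2 i0 i2 (by norm_num [hi0, hi2])
  have hc03 : Commute (a i0) (a i3) := hrel2 i0 i3 (by norm_num [hi0, hi3])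
  have hc0s : Commute (a i0) (a i3 * (a i2)⁻¹) := hc03.mul_right hc02.inv_right
  have hconj : a i2 * (a i3 * (a i2)⁻¹) * (a i2)⁻¹ = a i3 * (a i2)⁻¹ := by
    have hts : Commute (a i2 * (a i0)⁻¹) (a i3 * (a i2)⁻¹) := habel _ ht _ hs
    calc a i2 * (a i3 * (a i2)⁻¹) * (a i2)⁻¹
        = (a i2 * (a i0)⁻¹) * (a i0 * (a i3 * (a i2)⁻¹) * (a i0)⁻¹) * (a i2 * (a i0)⁻¹)⁻¹ := by
          group
      _ = (a i2 * (a i0)⁻¹) * (a i3 * (a i2)⁻¹) * (a i2 * (a i0)⁻¹)⁻¹ := by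
          rw [hc0s.eq]; group
      _ = a i3 * (a i2)⁻¹ := by rw [hts.eq]; group
  have hc23 : Commute (a i2) (a i3) := by
    show a i2 * a i3 = a i3 * a i2
    calc a i2 * a i3 = (a i2 * (a i3 * (a i2)⁻¹) * (a i2)⁻¹) * a i2 * a i2 := by group
      _ = (a i3 * (a i2)⁻¹) * a i2 * a i2 := by rw [hconj]
      _ = a i3 * a i2 := by group
  have h23 : a i2 = a i3 := eq_of_commute_of_braid hc23 (hrel1 i2 i3 rfl)
  have hc12 : Commute (a i1) (a i2) := h23 ▸ hrel2 i1 i3 (by norm_num [hi1, hi3])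
  have h12 : a i1 = a i2 := eq_of_commute_of_braid hc12 (hrel1 i1 i2 rfl)
  have hc01 : Commute (a i0) (a i1) := h12 ▸ hc02
  have h01 : a i0 = a i1 := eq_of_commute_of_braid hc01 (hrel1 i0 i1 rfl)
  -- all generators are equal in Q
  have hall : ∀ m (hm : m < n - 1), a ⟨m, hm⟩ = a i1 := by
    intro m
    induction m using Nat.strong_induction_on with
    | _ m ih =>
      intro hm
      match m, hm with
      | 0, hm => exact h01
      | 1, hm => rfl
      | 2, hm => exact h12.symm
      | 3, hm => exact (h23.symm.trans h12.symm)
      | (k+4), hm =>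
        have hm1 : k + 3 < n - 1 := by omega
        have hm2 : k + 2 < n - 1 := by omega
        have e1 : a ⟨k+3, hm1⟩ = a i1 := ih (k+3) (by omega) hm1
        have e2 : a ⟨k+2, hm2⟩ = a i1 := ih (k+2) (by omega) hm2
        have hcm : Commute (a ⟨k+2, hm2⟩) (a ⟨k+4, hm⟩) := hrel2 _ _ (by simp)
        have hcm' : Commute (a ⟨k+3, hm1⟩) (a ⟨k+4, hm⟩) := by
          rw [e1, ← e2]; exact hcm
        have hb : a ⟨k+3, hm1⟩ * a ⟨k+4, hm⟩ * a ⟨k+3, hm1⟩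
            = a ⟨k+4, hm⟩ * a ⟨k+3, hm1⟩ * a ⟨k+4, hm⟩ := hrel1 _ _ (by simp)
        rw [← eq_of_commute_of_braid hcm' hb]
        exact e1
  -- hence Q is generated by a single element, so it is abelian
  have hzp : ∀ q : Q, q ∈ Subgroup.zpowers (a i1) := by
    intro q
    obtain ⟨g, rfl⟩ := hπsurj q
    have : g ∈ Subgroup.comap π (Subgroup.zpowers (a i1)) := by
      refine PresentedGroup.generated_by (braidRels n) _ ?_ g
      intro j
      obtain ⟨m, hm⟩ := j
      show a ⟨m, hm⟩ ∈ Subgroup.zpowers (a i1)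
      rw [hall m hm]
      exact Subgroup.mem_zpowers _
    exact this
  have hQab : commutator Q ≤ ⊥ := by
    rw [commutator_def, Subgroup.commutator_le]
    intro g _ h _
    obtain ⟨k, hk⟩ := hzp g
    obtain ⟨l, hl⟩ := hzp h
    rw [Subgroup.mem_bot, commutatorElement_eq_one_iff_commute, ← hk, ← hl]
    exact (Commute.refl (a i1)).zpow_zpow k l
  -- conclude
  intro g hg
  have h1 : π g ∈ commutator Q := hmapcomm ▸ Subgroup.mem_map_of_mem π hg
  have h2 : π g = 1 := by simpa using hQab h1
  have : g ∈ π.ker := h2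
  rwa [hπ, QuotientGroup.ker_mk'] at this
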